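/- Let V be a valuation ring. Then every matrix of the form M = [[f(x), g(x), 0], [p(x), q(x), 0], [0, 0, 1]] in SL₃(V[x]) belongs to the elementary subgroup E₃(V[x]). -/

import Mathlib

open Matrix Polynomial

def ElemSet (ι R : Type) [Fintype ι] [DecidableEq ι] [CommRing R] :
    Set (Matrix ι ι R) :=
  { M | ∃ i j : ι, ∃ a : R, i ≠ j ∧ M = Matrix.transvection i j a }

def Elem (ι R : Type) [Fintype ι] [DecidableEq ι] [CommRing R] :
    Submonoid (Matrix ι ι R) :=
  Submonoid.closure (ElemSet ι R)

/-- A row is unimodular if its entries generate the unit ideal. -/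
def IsUnimodular {ι R : Type} [CommRing R] (v : ι → R) : Prop :=
  Ideal.span (Set.range v) = ⊤

/-- Two rows are equivalent under the elementary group if one is obtained from
the other by right multiplication by an element of `E_n(R)`. -/
def RowEquivE {ι R : Type} [Fintype ι] [DecidableEq ι] [CommRing R]
    (v w : ι → R) : Prop :=
  ∃ E ∈ Elem ι R, Matrix.vecMul v E = w

namespace St
variable {R : Type} [CommRing R]

def Dm (a b c d : R) : Matrix (Fin 3) (Fin 3) R := !![a,b,0;c,d,0;0,0,1]

abbrev tv (i j : Fin 3) (c : R) := Matrix.transvection i j c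

lemma tv_mem {i j : Fin 3} (h : i ≠ j) (c : R) : tv i j c ∈ Elem (Fin 3) R :=
  Submonoid.subset_closure ⟨i, j, c, h, rfl⟩

/-- every element of `Elem` has a two-sided inverse inside `Elem` -/
lemma exists_inv {X : Matrix (Fin 3) (Fin 3) R} (hX : X ∈ Elem (Fin 3) R) :
    ∃ Y ∈ Elem (Fin 3) R, X * Y = 1 ∧ Y * X = 1 := by
  induction hX using Submonoid.closure_induction with
  | mem x hx =>
    obtain ⟨i, j, a, hij, rfl⟩ := hx
    refine ⟨Matrix.transvection i j (-a), tv_mem hij _, ?_, ?_⟩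
    · rw [Matrix.transvection_mul_transvection_same _ _ hij, add_neg_cancel,
        Matrix.transvection_zero]
    · rw [Matrix.transvection_mul_transvection_same _ _ hij, neg_add_cancel,
        Matrix.transvection_zero]
  | one => exact ⟨1, Submonoid.one_mem _, by simp, by simp⟩
  | mul x y hx hy ihx ihy =>
    obtain ⟨X', hX', hx1, hx2⟩ := ihx
    obtain ⟨Y', hY', hy1, hy2⟩ := ihy
    refine ⟨Y' * X', Submonoid.mul_mem _ hY' hX', ?_, ?_⟩
    · calc x * y * (Y' * X') = x * (y * Y') * X' := by
            rw [mul_assoc, mul_assoc, mul_assoc]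
      _ = 1 := by rw [hy1, mul_one, hx1]
    · calc Y' * X' * (x * y) = Y' * (X' * x) * y := by
            rw [mul_assoc, mul_assoc, mul_assoc]
      _ = 1 := by rw [hx2, mul_one, hy2]

lemma mem_mul_iff {X E : Matrix (Fin 3) (Fin 3) R} (hE : E ∈ Elem (Fin 3) R) :
    X * E ∈ Elem (Fin 3) R ↔ X ∈ Elem (Fin 3) R := by
  obtain ⟨Y, hY, h1, _⟩ := exists_inv hE
  constructor
  · intro h
    have : X = X * E * Y := by rw [mul_assoc, h1, mul_one]
    rw [this]; exact Submonoid.mul_mem _ h hY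
  · intro h; exact Submonoid.mul_mem _ h hE

lemma mul_mem_iff {X E : Matrix (Fin 3) (Fin 3) R} (hE : E ∈ Elem (Fin 3) R) :
    E * X ∈ Elem (Fin 3) R ↔ X ∈ Elem (Fin 3) R := by
  obtain ⟨Y, hY, _, h2⟩ := exists_inv hE
  constructor
  · intro h
    have : X = Y * (E * X) := by rw [← mul_assoc, h2, one_mul]
    rw [this]; exact Submonoid.mul_mem _ hY h
  · intro h; exact Submonoid.mul_mem _ hE h

/-- peeling steps -/
lemma peelL {X Y : Matrix (Fin 3) (Fin 3) R} {i j : Fin 3} (hij : i ≠ j) (c : R)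
    (h : tv i j c * X = Y) : X ∈ Elem (Fin 3) R ↔ Y ∈ Elem (Fin 3) R := by
  rw [← h, mul_mem_iff (tv_mem hij c)]

lemma peelR {X Y : Matrix (Fin 3) (Fin 3) R} {i j : Fin 3} (hij : i ≠ j) (c : R)
    (h : X * tv i j c = Y) : X ∈ Elem (Fin 3) R ↔ Y ∈ Elem (Fin 3) R := by
  rw [← h, mem_mul_iff (tv_mem hij c)]

-- explicit forms of the six transvections
lemma tv01 (c : R) : tv 0 1 c = !![1,c,0;0,1,0;0,0,1] := by
  ext i j; fin_cases i <;> fin_cases j <;>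
    simp [Matrix.transvection, Matrix.single, Matrix.one_apply,
      Matrix.vecHead, Matrix.vecTail]
lemma tv10 (c : R) : tv 1 0 c = !![1,0,0;c,1,0;0,0,1] := by
  ext i j; fin_cases i <;> fin_cases j <;>
    simp [Matrix.transvection, Matrix.single, Matrix.one_apply,
      Matrix.vecHead, Matrix.vecTail]
lemma tv02 (c : R) : tv 0 2 c = !![1,0,c;0,1,0;0,0,1] := by
  ext i j; fin_cases i <;> fin_cases j <;>
    simp [Matrix.transvection, Matrix.single, Matrix.one_apply,
      Matrix.vecHead, Matrix.vecTail]
lemma tv20 (c : R) : tv 2 0 c = !![1,0,0;0,1,0;c,0,1] := by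
  ext i j; fin_cases i <;> fin_cases j <;>
    simp [Matrix.transvection, Matrix.single, Matrix.one_apply,
      Matrix.vecHead, Matrix.vecTail]
lemma tv12 (c : R) : tv 1 2 c = !![1,0,0;0,1,c;0,0,1] := by
  ext i j; fin_cases i <;> fin_cases j <;>
    simp [Matrix.transvection, Matrix.single, Matrix.one_apply,
      Matrix.vecHead, Matrix.vecTail]
lemma tv21 (c : R) : tv 2 1 c = !![1,0,0;0,1,0;0,c,1] := by
  ext i j; fin_cases i <;> fin_cases j <;>
    simp [Matrix.transvection, Matrix.single, Matrix.one_apply,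
      Matrix.vecHead, Matrix.vecTail]

/-- `T a b c d` : the embedded 2×2 matrix `[[a,b],[c,d]] ⊕ 1` is elementary. -/
def T (a b c d : R) : Prop := Dm a b c d ∈ Elem (Fin 3) R

-- column operation: col₂ += h · col₁
lemma move_colB {a b c d : R} (h : R) : T a b c d ↔ T a (b + a*h) c (d + c*h) := by
  unfold T
  have e : Dm a b c d * tv 0 1 h = Dm a (b + a*h) c (d + c*h) := by
    rw [tv01, Dm, Dm, Matrix.mul_fin_three]; congr 1 <;> ring
  exact peelR (by decide) h e

-- column operation: col₁ += h · col₂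
lemma move_colA {a b c d : R} (h : R) : T a b c d ↔ T (a + b*h) b (c + d*h) d := by
  unfold T
  have e : Dm a b c d * tv 1 0 h = Dm (a + b*h) b (c + d*h) d := by
    rw [tv10, Dm, Dm, Matrix.mul_fin_three]; congr 1 <;> ring
  exact peelR (by decide) h e

-- row operation: row₂ += h · row₁
lemma move_rowC {a b c d : R} (h : R) : T a b c d ↔ T a b (c + h*a) (d + h*b) := by
  unfold T
  have e : tv 1 0 h * Dm a b c d = Dm a b (c + h*a) (d + h*b) := by
    rw [tv10, Dm, Dm, Matrix.mul_fin_three]; congr 1 <;> ring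
  exact peelL (by decide) h e

-- row operation: row₁ += h · row₂
lemma move_rowA {a b c d : R} (h : R) : T a b c d ↔ T (a + h*c) (b + h*d) c d := by
  unfold T
  have e : tv 0 1 h * Dm a b c d = Dm (a + h*c) (b + h*d) c d := by
    rw [tv01, Dm, Dm, Matrix.mul_fin_three]; congr 1 <;> ring
  exact peelL (by decide) h e

/-- the signed column swap -/
lemma move_swap {a b c d : R} : T a b c d ↔ T (-b) a (-d) c := by
  unfold T
  have h1 : Dm a b c d * tv 0 1 1 = !![a, b+a, 0; c, d+c, 0; 0,0,1] := by
    rw [tv01, Dm, Matrix.mul_fin_three]; congr 1 <;> ring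
  have h2 : (!![a, b+a, 0; c, d+c, 0; 0,0,1] : Matrix _ _ R) * tv 1 0 (-1) =
      !![-b, b+a, 0; -d, d+c, 0; 0,0,1] := by
    rw [tv10, Matrix.mul_fin_three]; congr 1 <;> ring
  have h3 : (!![-b, b+a, 0; -d, d+c, 0; 0,0,1] : Matrix _ _ R) * tv 0 1 1 =
      Dm (-b) a (-d) c := by
    rw [tv01, Dm, Matrix.mul_fin_three]; congr 1 <;> ring
  rw [peelR (by decide) _ h1, peelR (by decide) _ h2, peelR (by decide) _ h3]

/-- the matrix diag(1,-1,-1) is elementary -/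
lemma diagS_mem : (!![(1:R),0,0;0,-1,0;0,0,-1]) ∈ Elem (Fin 3) R := by
  have h1 : tv 1 2 (1:R) * (!![(1:R),0,0;0,-1,0;0,0,-1]) = !![(1:R),0,0;0,-1,-1;0,0,-1] := by
    rw [tv12, Matrix.mul_fin_three]; congr 1 <;> ring
  have h2 : tv 2 1 (-1:R) * (!![(1:R),0,0;0,-1,-1;0,0,-1]) = !![(1:R),0,0;0,-1,-1;0,1,0] := by
    rw [tv21, Matrix.mul_fin_three]; congr 1 <;> ring
  have h3 : tv 1 2 (1:R) * (!![(1:R),0,0;0,-1,-1;0,1,0]) = !![(1:R),0,0;0,0,-1;0,1,0] := by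
    rw [tv12, Matrix.mul_fin_three]; congr 1 <;> ring
  rw [peelL (by decide) _ h1, peelL (by decide) _ h2, peelL (by decide) _ h3]
  have e : (!![(1:R),0,0;0,0,-1;0,1,0]) = tv 1 2 (-1) * (tv 2 1 1 * tv 1 2 (-1)) := by
    rw [tv12, tv21, Matrix.mul_fin_three, Matrix.mul_fin_three]; congr 1 <;> ring
  rw [e]
  exact Submonoid.mul_mem _ (tv_mem (by decide) _)
    (Submonoid.mul_mem _ (tv_mem (by decide) _) (tv_mem (by decide) _))

/-- sign flip on the off-diagonal entries -/
lemma move_sign {a b c d : R} : T a b c d ↔ T a (-b) (-c) d := by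
  unfold T
  have e : Dm a (-b) (-c) d =
      !![(1:R),0,0;0,-1,0;0,0,-1] * Dm a b c d * !![(1:R),0,0;0,-1,0;0,0,-1] := by
    rw [Dm, Dm, Matrix.mul_fin_three, Matrix.mul_fin_three]; congr 1 <;> ring
  constructor
  · intro H
    rw [e, mem_mul_iff diagS_mem, mul_mem_iff diagS_mem]; exact H
  · intro H
    rw [e, mem_mul_iff diagS_mem, mul_mem_iff diagS_mem] at H; exact H

/-- diag(u, v, 1) with u*v = 1 is elementary -/
lemma diag_mem {u v : R} (huv : u * v = 1) : (!![u,0,0;0,v,0;0,0,1]) ∈ Elem (Fin 3) R := by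
  have h1 : tv 0 1 (-u) * (!![u,0,0;0,v,0;0,0,1]) = !![u,-u*v,0;0,v,0;0,0,1] := by
    rw [tv01, Matrix.mul_fin_three]; congr 1 <;> ring
  rw [show (-u*v : R) = -1 by linear_combination -huv] at h1
  have h2 : tv 1 0 v * (!![u,-1,0;0,v,0;0,0,1]) = !![u,-1,0;v*u,0,0;0,0,1] := by
    rw [tv10, Matrix.mul_fin_three]; congr 1 <;> ring
  rw [show (v*u : R) = 1 by linear_combination huv] at h2
  have h3 : tv 0 1 (-u) * (!![u,-1,0;(1:R),0,0;0,0,1]) = !![0,-1,0;(1:R),0,0;0,0,1] := by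
    rw [tv01, Matrix.mul_fin_three]; congr 1 <;> ring
  rw [peelL (by decide) _ h1, peelL (by decide) _ h2, peelL (by decide) _ h3]
  have e : (!![(0:R),-1,0;(1:R),0,0;0,0,1]) = tv 0 1 (-1) * (tv 1 0 1 * tv 0 1 (-1)) := by
    rw [tv01, tv10, Matrix.mul_fin_three, Matrix.mul_fin_three]; congr 1 <;> ring
  rw [e]
  exact Submonoid.mul_mem _ (tv_mem (by decide) _)
    (Submonoid.mul_mem _ (tv_mem (by decide) _) (tv_mem (by decide) _))

/-- base case: if `a` is a unit (with inverse e) and the determinant is 1,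
the matrix is elementary. -/
lemma T_of_unit {a b c d e : R} (hae : a * e = 1) (hdet : a*d - b*c = 1) : T a b c d := by
  have h1 : T a b c d ↔ T a b (c + (-(c*e))*a) (d + (-(c*e))*b) := move_rowC _
  have hc0 : c + (-(c*e))*a = 0 := by linear_combination (-c) * hae
  have h2 : T a b (c + (-(c*e))*a) (d + (-(c*e))*b) ↔
      T a (b + a * (-(e*b))) 0 ((d + (-(c*e))*b) + 0 * (-(e*b))) := by
    rw [hc0]; exact move_colB _
  have hb0 : b + a * (-(e*b)) = 0 := by linear_combination (-b) * hae
  have hd : (d + (-(c*e))*b) + 0 * (-(e*b)) = e := by linear_combination e * hdet - d * hae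
  rw [h1, h2, hb0, hd]
  unfold T
  have : Dm a 0 0 e = !![a,0,0;0,e,0;0,0,1] := by rw [Dm]
  rw [this]
  exact diag_mem hae


/-- completion independence: membership only depends on the first row pair -/
lemma T_ind {a b p1 q1 p2 q2 : R} (h1 : a*q1 - b*p1 = 1) (h2 : a*q2 - b*p2 = 1)
    (H : T a b p1 q1) : T a b p2 q2 := by
  set u : R := p2 - p1 with hu
  set w : R := q2 - q1 with hw
  have hrel : a*w - b*u = 0 := by rw [hu, hw]; linear_combination h2 - h1
  -- U = I + ξ ηᵀ with ξ = (-b, a, 0), η = (u, w, 0)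
  set U : Matrix (Fin 3) (Fin 3) R := !![1 - b*u, -(b*w), 0; a*u, 1 + a*w, 0; 0,0,1] with hU
  have sU : Dm a b p1 q1 * U = Dm a b p2 q2 := by
    rw [hU, Dm, Dm, Matrix.mul_fin_three]
    ext i j; fin_cases i <;> fin_cases j <;>
      simp [Matrix.vecHead, Matrix.vecTail] <;>
      first
        | ring1
        | linear_combination (p2 - p1) * h1
        | linear_combination (q2 - q1) * h1
        | linear_combination (-(p2 - p1)) * h1
        | linear_combination (-(q2 - q1)) * h1
  have hUmem : U ∈ Elem (Fin 3) R := by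
    have e1 : U * tv 0 2 (-b) = !![1 - b*u, -(b*w), -b*(1 - b*u); a*u, 1 + a*w, -b*(a*u); 0,0,1] := by
      rw [hU, tv02, Matrix.mul_fin_three]; congr 1 <;> ring
    have e2 : (!![1 - b*u, -(b*w), -b*(1 - b*u); a*u, 1 + a*w, -b*(a*u); 0,0,1] : Matrix _ _ R)
        * tv 1 2 a = !![1 - b*u, -(b*w), -b; a*u, 1 + a*w, a; 0,0,1] := by
      rw [tv12, Matrix.mul_fin_three]
      ext i j; fin_cases i <;> fin_cases j <;>
        simp [Matrix.vecHead, Matrix.vecTail] <;>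
        first
          | ring1
          | linear_combination (-b) * hrel
          | linear_combination b * hrel
          | linear_combination a * hrel
          | linear_combination (-a) * hrel
    have e3 : (!![1 - b*u, -(b*w), -b; a*u, 1 + a*w, a; 0,0,1] : Matrix _ _ R)
        * tv 2 0 (-u) = !![1, -(b*w), -b; 0, 1 + a*w, a; -u, 0, 1] := by
      rw [tv20, Matrix.mul_fin_three]; congr 1 <;> ring
    have e4 : (!![(1:R), -(b*w), -b; 0, 1 + a*w, a; -u, 0, 1] : Matrix _ _ R)
        * tv 2 1 (-w) = !![(1:R), 0, -b; 0, 1, a; -u, -w, 1] := by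
      rw [tv21, Matrix.mul_fin_three]; congr 1 <;> ring
    have e5 : tv 2 0 u * (!![(1:R), 0, -b; 0, 1, a; -u, -w, 1] : Matrix _ _ R)
        = !![(1:R), 0, -b; 0, 1, a; 0, -w, 1 - u*b] := by
      rw [tv20, Matrix.mul_fin_three]; congr 1 <;> ring
    have e6 : tv 2 1 w * (!![(1:R), 0, -b; 0, 1, a; 0, -w, 1 - u*b] : Matrix _ _ R)
        = !![(1:R), 0, -b; 0, 1, a; 0, 0, 1] := by
      rw [tv21, Matrix.mul_fin_three]
      ext i j; fin_cases i <;> fin_cases j <;>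
        simp [Matrix.vecHead, Matrix.vecTail] <;>
        first
          | ring1
          | linear_combination hrel
          | linear_combination (-1 : R) * hrel
    rw [peelR (by decide) _ e1, peelR (by decide) _ e2, peelR (by decide) _ e3,
      peelR (by decide) _ e4, peelL (by decide) _ e5, peelL (by decide) _ e6]
    have e7 : (!![(1:R), 0, -b; 0, 1, a; 0, 0, 1]) = tv 0 2 (-b) * tv 1 2 a := by
      rw [tv02, tv12, Matrix.mul_fin_three]; congr 1 <;> ring
    rw [e7]
    exact Submonoid.mul_mem _ (tv_mem (by decide) _) (tv_mem (by decide) _)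
  unfold T at H ⊢
  rw [← sU]
  exact Submonoid.mul_mem _ H hUmem

/-- the Mennicke multiplicativity (forward direction):
from `T a b p1 q1` and `T a' b p2 q2` we get `T (a*a') b _ _`. -/
lemma T_mult {a a' b p1 q1 p2 q2 : R} (h1 : a*q1 - b*p1 = 1) (h2 : a'*q2 - b*p2 = 1)
    (H1 : T a b p1 q1) (H2 : T a' b p2 q2) :
    T (a*a') b (p2 + p1*q2*a') (q1*q2) := by
  -- Pc, Pc' : signed permutation matrices for the (2,3) swap
  set Pc : Matrix (Fin 3) (Fin 3) R := !![1,0,0;0,0,1;0,-1,0] with hPc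
  set Pc' : Matrix (Fin 3) (Fin 3) R := !![1,0,0;0,0,-1;0,1,0] with hPc'
  have hPcm : Pc ∈ Elem (Fin 3) R := by
    have e : Pc = tv 1 2 1 * (tv 2 1 (-1) * tv 1 2 1) := by
      rw [hPc, tv12, tv21, Matrix.mul_fin_three, Matrix.mul_fin_three]; congr 1 <;> ring
    rw [e]
    exact Submonoid.mul_mem _ (tv_mem (by decide) _)
      (Submonoid.mul_mem _ (tv_mem (by decide) _) (tv_mem (by decide) _))
  have hPc'm : Pc' ∈ Elem (Fin 3) R := by
    have e : Pc' = tv 1 2 (-1) * (tv 2 1 1 * tv 1 2 (-1)) := by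
      rw [hPc', tv12, tv21, Matrix.mul_fin_three, Matrix.mul_fin_three]; congr 1 <;> ring
    rw [e]
    exact Submonoid.mul_mem _ (tv_mem (by decide) _)
      (Submonoid.mul_mem _ (tv_mem (by decide) _) (tv_mem (by decide) _))
  set B : Matrix (Fin 3) (Fin 3) R := !![a',0,-b; 0,1,0; -p2,0,q2] with hB
  have hBmem : B ∈ Elem (Fin 3) R := by
    have e : B = Pc * Dm a' b p2 q2 * Pc' := by
      rw [hPc, hPc', hB, Dm, Matrix.mul_fin_three, Matrix.mul_fin_three]; congr 1 <;> ring
    rw [e, mem_mul_iff hPc'm, mul_mem_iff hPcm]; exact H2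
  have s1 : Dm a b p1 q1 * B = !![a*a', b, -(a*b); p1*a', q1, -(p1*b); -p2, 0, q2] := by
    rw [hB, Dm, Matrix.mul_fin_three]; congr 1 <;> ring
  have s2 : (!![a*a', b, -(a*b); p1*a', q1, -(p1*b); -p2, 0, q2] : Matrix _ _ R) * tv 1 2 a
      = !![a*a', b, 0; p1*a', q1, 1; -p2, 0, q2] := by
    rw [tv12, Matrix.mul_fin_three]
    ext i j; fin_cases i <;> fin_cases j <;>
      simp [Matrix.vecHead, Matrix.vecTail] <;>
      first
        | ring1
        | linear_combination h1
        | linear_combination (-1 : R) * h1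
  have s3 : tv 2 1 (-q2) * (!![a*a', b, 0; p1*a', q1, 1; -p2, 0, q2] : Matrix _ _ R)
      = !![a*a', b, 0; p1*a', q1, 1; -(p2 + p1*q2*a'), -(q1*q2), 0] := by
    rw [tv21, Matrix.mul_fin_three]; congr 1 <;> ring
  have s4 : (!![a*a', b, 0; p1*a', q1, 1; -(p2 + p1*q2*a'), -(q1*q2), 0] : Matrix _ _ R)
      * tv 2 0 (-(p1*a'))
      = !![a*a', b, 0; 0, q1, 1; -(p2 + p1*q2*a'), -(q1*q2), 0] := by
    rw [tv20, Matrix.mul_fin_three]; congr 1 <;> ring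
  have s5 : (!![a*a', b, 0; 0, q1, 1; -(p2 + p1*q2*a'), -(q1*q2), 0] : Matrix _ _ R)
      * tv 2 1 (-q1)
      = !![a*a', b, 0; 0, 0, 1; -(p2 + p1*q2*a'), -(q1*q2), 0] := by
    rw [tv21, Matrix.mul_fin_three]; congr 1 <;> ring
  have s6 : Pc' * (!![a*a', b, 0; 0, 0, 1; -(p2 + p1*q2*a'), -(q1*q2), 0] : Matrix _ _ R)
      = Dm (a*a') b (p2 + p1*q2*a') (q1*q2) := by
    rw [hPc', Dm, Matrix.mul_fin_three]; congr 1 <;> ring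
  unfold T
  rw [← s6, ← s5, ← s4, ← s3, ← s2, ← s1]
  refine Submonoid.mul_mem _ hPc'm ?_
  refine Submonoid.mul_mem _ ?_ (tv_mem (by decide) _)
  refine Submonoid.mul_mem _ ?_ (tv_mem (by decide) _)
  refine Submonoid.mul_mem _ (tv_mem (by decide) _) ?_
  refine Submonoid.mul_mem _ ?_ (tv_mem (by decide) _)
  exact Submonoid.mul_mem _ H1 hBmem


/-- the Mennicke symbol predicate: some completion of the row (a, b) is elementary -/
def tau (a b : R) : Prop := ∃ p q, a*q - b*p = 1 ∧ T a b p q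

lemma tau_of_unit {a b p q : R} (ha : IsUnit a) (h : a*q - b*p = 1) : tau a b := by
  obtain ⟨e, he⟩ := ha.exists_right_inv
  exact ⟨p, q, h, T_of_unit he h⟩

lemma tau_swap {a b : R} (H : tau a b) : tau (-b) a := by
  obtain ⟨p, q, hd, h⟩ := H
  exact ⟨-q, p, by linear_combination hd, move_swap.mp h⟩

lemma tau_sign {a b : R} (H : tau a b) : tau a (-b) := by
  obtain ⟨p, q, hd, h⟩ := H
  exact ⟨-p, q, by linear_combination hd, move_sign.mp h⟩

lemma tau_sign' {a b : R} (H : tau a (-b)) : tau a b := by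
  have := tau_sign H; rwa [neg_neg] at this

lemma tau_unswap {a b : R} (H : tau (-b) a) : tau a b := by
  have h1 := tau_swap H      -- tau (-a) (-b)
  have h2 := tau_swap h1     -- tau (- -b) (-a)
  rw [neg_neg] at h2         -- tau b (-a)
  have h3 := tau_swap h2     -- tau (- -a) b
  rwa [neg_neg] at h3

lemma tau_addB {a b : R} (h : R) (H : tau a b) : tau a (b + a*h) := by
  obtain ⟨p, q, hd, hT⟩ := H
  exact ⟨p, q + p*h, by linear_combination hd, (move_colB h).mp hT⟩

lemma tau_addB' {a b : R} (h : R) (H : tau a (b + a*h)) : tau a b := by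
  have := tau_addB (-h) H
  have e : b + a*h + a*(-h) = b := by ring
  rwa [e] at this

lemma tau_addA {a b : R} (h : R) (H : tau a b) : tau (a + b*h) b := by
  obtain ⟨p, q, hd, hT⟩ := H
  exact ⟨p + q*h, q, by linear_combination hd, (move_colA h).mp hT⟩

lemma tau_addA' {a b : R} (h : R) (H : tau (a + b*h) b) : tau a b := by
  have := tau_addA (-h) H
  have e : a + b*h + b*(-h) = a := by ring
  rwa [e] at this

lemma tau_of_unit_second {a b p q : R} (hb : IsUnit b) (h : a*q - b*p = 1) : tau a b := by
  refine tau_unswap (tau_of_unit hb.neg (q := p) (p := -q) ?_)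
  linear_combination h

/-- multiplicativity in the first slot -/
lemma tau_mult {a a' b : R} (H1 : tau a b) (H2 : tau a' b) : tau (a*a') b := by
  obtain ⟨p1, q1, hd1, h1⟩ := H1
  obtain ⟨p2, q2, hd2, h2⟩ := H2
  exact ⟨p2 + p1*q2*a', q1*q2, by linear_combination a'*q2*hd1 + hd2,
    T_mult hd1 hd2 h1 h2⟩

/-- multiplicativity in the second slot -/
lemma tau_mult_second {a b b' : R} (H1 : tau a b) (H2 : tau a b') : tau a (b*b') := by
  have s1 := tau_swap H1
  have s2 := tau_swap H2
  have m := tau_mult s1 s2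
  rw [neg_mul_neg] at m
  have m3 := tau_swap (tau_swap (tau_swap m))
  rw [neg_neg] at m3
  exact tau_sign' m3


/-! ### Valuation / local ring helpers -/

section Val
variable {V : Type} [CommRing V] (hV : ∀ a b : V, a ∣ b ∨ b ∣ a)

lemma nonunit_mul {a : V} (ha : ¬IsUnit a) (x : V) : ¬IsUnit (a*x) :=
  fun h => ha (isUnit_of_mul_isUnit_left h)

include hV in
lemma nonunits_add {a b : V} (ha : ¬IsUnit a) (hb : ¬IsUnit b) : ¬IsUnit (a + b) := by
  rcases hV a b with ⟨c, rfl⟩ | ⟨c, rfl⟩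
  · intro h
    rw [show a + a*c = a*(1+c) by ring] at h
    exact ha (isUnit_of_mul_isUnit_left h)
  · intro h
    rw [show b*c + b = b*(c+1) by ring] at h
    exact hb (isUnit_of_mul_isUnit_left h)

include hV in
lemma nonunits_sub {a b : V} (ha : ¬IsUnit a) (hb : ¬IsUnit b) : ¬IsUnit (a - b) := by
  have hb' : ¬IsUnit (-b) := fun h => hb (by simpa using h.neg)
  rw [sub_eq_add_neg]; exact nonunits_add hV ha hb'

include hV in
lemma unit_sub_nonunit {a b : V} (ha : IsUnit a) (hb : ¬IsUnit b) : IsUnit (a - b) := by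
  by_contra h
  refine (nonunits_add hV h hb) ?_
  have e : a - b + b = a := by ring
  rw [e]; exact ha

include hV in
lemma chain_max (g : ℕ → V) :
    ∀ s : Finset ℕ, s.Nonempty → ∃ j ∈ s, ∀ k ∈ s, g k ∣ g j := by
  intro s
  induction s using Finset.induction_on with
  | empty => intro h; exact absurd h (by simp)
  | insert a s' ha IH =>
    intro _
    by_cases hs' : s'.Nonempty
    · obtain ⟨j, hj, hmax⟩ := IH hs'
      rcases hV (g a) (g j) with h | h
      · refine ⟨j, Finset.mem_insert_of_mem hj, ?_⟩
        intro k hk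
        rcases Finset.mem_insert.mp hk with rfl | hk'
        · exact h
        · exact hmax k hk'
      · refine ⟨a, Finset.mem_insert_self _ _, ?_⟩
        intro k hk
        rcases Finset.mem_insert.mp hk with rfl | hk'
        · exact dvd_refl _
        · exact dvd_trans (hmax k hk') h
    · rw [Finset.not_nonempty_iff_eq_empty] at hs'
      subst hs'
      refine ⟨a, Finset.mem_insert_self _ _, ?_⟩
      intro k hk
      rcases Finset.mem_insert.mp hk with rfl | hk'
      · exact dvd_refl _
      · exact absurd hk' (by simp)

include hV in
lemma chain_min (g : ℕ → V) :
    ∀ s : Finset ℕ, s.Nonempty → ∃ j ∈ s, ∀ k ∈ s, g j ∣ g k := by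
  intro s
  induction s using Finset.induction_on with
  | empty => intro h; exact absurd h (by simp)
  | insert a s' ha IH =>
    intro _
    by_cases hs' : s'.Nonempty
    · obtain ⟨j, hj, hmin⟩ := IH hs'
      rcases hV (g a) (g j) with h | h
      · refine ⟨a, Finset.mem_insert_self _ _, ?_⟩
        intro k hk
        rcases Finset.mem_insert.mp hk with rfl | hk'
        · exact dvd_refl _
        · exact dvd_trans h (hmin k hk')
      · refine ⟨j, Finset.mem_insert_of_mem hj, ?_⟩
        intro k hk
        rcases Finset.mem_insert.mp hk with rfl | hk'
        · exact h
        · exact hmin k hk'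
    · rw [Finset.not_nonempty_iff_eq_empty] at hs'
      subst hs'
      refine ⟨a, Finset.mem_insert_self _ _, ?_⟩
      intro k hk
      rcases Finset.mem_insert.mp hk with rfl | hk'
      · exact dvd_refl _
      · exact absurd hk' (by simp)

end Val

/-! ### Polynomial helpers -/

section Poly
variable {V : Type} [CommRing V]
open Polynomial

/-- writing a polynomial with chosen coefficient quotients as `C c * _` -/
lemma eq_C_mul_sum {c : V} {G : V[X]} (f : ℕ → V)
    (hf : ∀ k ∈ G.support, G.coeff k = c * f k) :
    G = C c * ∑ k ∈ G.support, Polynomial.monomial k (f k) := by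
  ext n
  rw [Polynomial.coeff_C_mul, Polynomial.finset_sum_coeff]
  simp only [Polynomial.coeff_monomial]
  rw [Finset.sum_ite_eq' G.support n f]
  by_cases hn : n ∈ G.support
  · simp [hn, hf n hn]
  · simp [hn, Polynomial.notMem_support_iff.mp hn]

lemma natDegree_sum_monomial_le (s : Finset ℕ) (f : ℕ → V) (d : ℕ)
    (hd : ∀ k ∈ s, k ≤ d) :
    (∑ k ∈ s, Polynomial.monomial k (f k)).natDegree ≤ d := by
  refine Polynomial.natDegree_sum_le_of_forall_le _ _ ?_
  intro k hk
  exact (Polynomial.natDegree_monomial_le _).trans (hd k hk)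

/-- nilpotency of higher coefficients modulo the second slot -/
lemma nilpotent_coeff_of_uni {F p q : V[X]} {c : V}
    (h : F*q - C c*p = 1) (k : ℕ) (hk : k ≠ 0) : ∃ N : ℕ, c ∣ (F.coeff k)^N := by
  set I := Ideal.span {c} with hI
  set φ := Ideal.Quotient.mk I with hφ
  have hc0 : φ c = 0 := Ideal.Quotient.eq_zero_iff_mem.mpr (Ideal.mem_span_singleton_self c)
  have hmap : (F.map φ) * (q.map φ) = 1 := by
    have := congrArg (Polynomial.map φ) h
    rw [Polynomial.map_sub, Polynomial.map_mul, Polynomial.map_mul, Polynomial.map_one,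
      Polynomial.map_C, hc0, Polynomial.C_0, zero_mul, sub_zero] at this
    exact this
  have hunit : IsUnit (F.map φ) := IsUnit.of_mul_eq_one _ hmap
  have hnil : IsNilpotent ((F.map φ).coeff k) :=
    (Polynomial.isUnit_iff_coeff_isUnit_isNilpotent.mp hunit).2 k hk
  rw [Polynomial.coeff_map] at hnil
  obtain ⟨N, hN⟩ := hnil
  refine ⟨N, ?_⟩
  rw [← map_pow] at hN
  rw [← Ideal.mem_span_singleton]
  exact Ideal.Quotient.eq_zero_iff_mem.mp hN

end Poly


section LemA
open scoped Classical
variable {V : Type} [CommRing V]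

/-- the set of "surviving" coefficient indices: nonconstant coefficients
not divisible by `c` -/
noncomputable def Sv (F : Polynomial V) (c : V) : Finset ℕ :=
  F.support.filter (fun k => ¬ (k = 0) ∧ ¬ c ∣ F.coeff k)

lemma mem_Sv {F : Polynomial V} {c : V} {k : ℕ} :
    k ∈ Sv F c ↔ k ∈ F.support ∧ k ≠ 0 ∧ ¬ c ∣ F.coeff k := by
  simp [Sv]

variable (hV : ∀ a b : V, a ∣ b ∨ b ∣ a)

include hV in
/-- Lemma A: Mennicke symbols with constant second entry are trivial. -/
theorem lemA : ∀ t μ : ℕ, ∀ (F : Polynomial V) (c : V) (p q : Polynomial V),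
    F*q - Polynomial.C c*p = 1 → IsUnit (F.coeff 0) →
    (Sv F c).card ≤ t →
    ((Sv F c).Nonempty →
      ∃ k₀ ∈ Sv F c, (∀ k ∈ Sv F c, F.coeff k ∣ F.coeff k₀) ∧ c ∣ (F.coeff k₀)^μ) →
    tau F (Polynomial.C c) := by
  intro t
  induction t using Nat.strong_induction_on with
  | _ t IHt =>
  intro μ
  induction μ using Nat.strong_induction_on with
  | _ μ IHμ =>
  intro F c p q hdet h0 hcard hlam
  by_cases hc : IsUnit c
  · exact tau_of_unit_second (Polynomial.isUnit_C.mpr hc) hdet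
  by_cases hsv : (Sv F c).Nonempty
  swap
  · -- no survivors : F ≡ unit constant mod c
    set tail : Polynomial V := F - Polynomial.C (F.coeff 0) with htail
    have hdvd : ∀ k ∈ tail.support, c ∣ tail.coeff k := by
      intro k hk
      have hk0 : tail.coeff k ≠ 0 := Polynomial.mem_support_iff.mp hk
      by_cases hk' : k = 0
      · subst hk'
        rw [htail] at hk0
        simp at hk0
      · have hco : tail.coeff k = F.coeff k := by
          rw [htail]; simp [Polynomial.coeff_C, hk']
        rw [hco]
        by_contra hnd
        have hFk : F.coeff k ≠ 0 := by rwa [hco] at hk0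
        have : k ∈ Sv F c := mem_Sv.mpr ⟨Polynomial.mem_support_iff.mpr hFk, hk', hnd⟩
        exact hsv ⟨k, this⟩
    set qf : ℕ → V := fun k => if h : k ∈ tail.support then Classical.choose (hdvd k h) else 0
      with hqf
    have hfq : ∀ k ∈ tail.support, tail.coeff k = c * qf k := by
      intro k hk
      rw [hqf]; simp only [hk, dif_pos]
      exact Classical.choose_spec (hdvd k hk)
    have hFH := eq_C_mul_sum qf hfq
    set H := ∑ k ∈ tail.support, Polynomial.monomial k (qf k) with hH
    obtain ⟨e0, he0⟩ := h0.exists_right_inv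
    have base : tau (Polynomial.C (F.coeff 0)) (Polynomial.C c) := by
      refine tau_of_unit (Polynomial.isUnit_C.mpr h0) (p := 0) (q := Polynomial.C e0) ?_
      rw [← Polynomial.C_mul, he0]
      simp
    have step := tau_addA (h := H) base
    have : Polynomial.C (F.coeff 0) + Polynomial.C c * H = F := by
      rw [← hFH, htail]; ring
    rwa [this] at step
  · -- survivors exist
    obtain ⟨k₀, hk₀mem, hdivmax, hnil⟩ := hlam hsv
    obtain ⟨hk₀sup, hk₀ne, hk₀nd⟩ := mem_Sv.mp hk₀mem
    set lam := F.coeff k₀ with hlamdef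
    have hex : ∃ N, c ∣ lam^N := ⟨μ, hnil⟩
    set N₀ := Nat.find hex with hN₀
    have hspec : c ∣ lam^N₀ := Nat.find_spec hex
    have hN₀μ : N₀ ≤ μ := Nat.find_le hnil
    have hN₀2 : 2 ≤ N₀ := by
      by_contra hlt
      push_neg at hlt
      interval_cases N₀
      · rw [pow_zero] at hspec
        exact hc (isUnit_of_dvd_one hspec)
      · rw [pow_one] at hspec
        exact hk₀nd hspec
    have h1 : ¬ c ∣ lam^(N₀ - 1) := Nat.find_min hex (by omega)
    have h2 : lam^(N₀-1) ∣ c := by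
      rcases hV c (lam^(N₀-1)) with h | h
      · exact absurd h h1
      · exact h
    obtain ⟨e, hce⟩ := h2
    obtain ⟨d, hd⟩ := hspec
    set z := lam - e*d with hzdef
    have hz : lam^(N₀-1) * z = 0 := by
      have hpow : lam^(N₀-1) * lam = lam^N₀ := by
        rw [← pow_succ]
        congr 1
        omega
      calc lam^(N₀-1) * z = lam^(N₀-1)*lam - (lam^(N₀-1)*e)*d := by rw [hzdef]; ring
      _ = lam^N₀ - c*d := by rw [hpow, ← hce]
      _ = 0 := by rw [← hd]; ring
    rcases hV e z with ⟨z', hz'⟩ | ⟨e', he'⟩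
    · -- e ∣ z hence e ∣ lam : the split works
      have hedvd : e ∣ lam := ⟨d + z', by rw [hzdef] at hz'; linear_combination hz'⟩
      have hsplit : c = lam * (lam^(N₀-2) * e) := by
        rw [hce]
        have : lam^(N₀-1) = lam * lam^(N₀-2) := by
          rw [← pow_succ']
          congr 1
          omega
        rw [this]; ring
      set c₂ := lam^(N₀-2) * e with hc₂def
      -- call X : tau F (C lam)
      have uniX : F*q - Polynomial.C lam*(Polynomial.C c₂*p) = 1 := by
        rw [← mul_assoc, ← Polynomial.C_mul, ← hsplit]; exact hdet
      have hXsub : Sv F lam ⊆ (Sv F c).erase k₀ := by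
        intro k hk
        obtain ⟨hks, hkne, hknd⟩ := mem_Sv.mp hk
        refine Finset.mem_erase.mpr ⟨?_, mem_Sv.mpr ⟨hks, hkne, ?_⟩⟩
        · rintro rfl
          exact hknd (dvd_refl _)
        · intro hcd
          exact hknd (dvd_trans ⟨lam^(N₀-2)*e, hsplit⟩ hcd)
      have hXcard : (Sv F lam).card < t := by
        have h1' : (Sv F lam).card ≤ ((Sv F c).erase k₀).card := Finset.card_le_card hXsub
        have h2' : ((Sv F c).erase k₀).card < (Sv F c).card := Finset.card_erase_lt_of_mem hk₀mem
        have h3' : 0 < (Sv F c).card := Finset.card_pos.mpr hsv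
        omega
      have callX : tau F (Polynomial.C lam) := by
        by_cases hne : (Sv F lam).Nonempty
        · obtain ⟨j, hj, hjmax⟩ := chain_max hV F.coeff (Sv F lam) hne
          have hjne : j ≠ 0 := (mem_Sv.mp hj).2.1
          obtain ⟨Nj, hNj⟩ := nilpotent_coeff_of_uni uniX j hjne
          exact IHt (Sv F lam).card hXcard Nj F lam (Polynomial.C c₂*p) q uniX h0 le_rfl
            (fun _ => ⟨j, hj, hjmax, hNj⟩)
        · exact IHt (Sv F lam).card hXcard 0 F lam (Polynomial.C c₂*p) q uniX h0 le_rfl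
            (fun h => absurd h hne)
      -- call Y : tau F (C c₂)
      have uniY : F*q - Polynomial.C c₂*(Polynomial.C lam*p) = 1 := by
        rw [← mul_assoc, ← Polynomial.C_mul, mul_comm c₂ lam, ← hsplit]; exact hdet
      have hc₂dvdc : c₂ ∣ c := ⟨lam, by rw [hsplit]; ring⟩
      have hYsub : Sv F c₂ ⊆ Sv F c := by
        intro k hk
        obtain ⟨hks, hkne, hknd⟩ := mem_Sv.mp hk
        exact mem_Sv.mpr ⟨hks, hkne, fun hcd => hknd (dvd_trans hc₂dvdc hcd)⟩
      have callY : tau F (Polynomial.C c₂) := by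
        by_cases hYlt : (Sv F c₂).card < t
        · by_cases hne : (Sv F c₂).Nonempty
          · obtain ⟨j, hj, hjmax⟩ := chain_max hV F.coeff (Sv F c₂) hne
            have hjne : j ≠ 0 := (mem_Sv.mp hj).2.1
            obtain ⟨Nj, hNj⟩ := nilpotent_coeff_of_uni uniY j hjne
            exact IHt (Sv F c₂).card hYlt Nj F c₂ (Polynomial.C lam*p) q uniY h0 le_rfl
              (fun _ => ⟨j, hj, hjmax, hNj⟩)
          · exact IHt (Sv F c₂).card hYlt 0 F c₂ (Polynomial.C lam*p) q uniY h0 le_rfl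
              (fun h => absurd h hne)
        · -- the survivor sets coincide; use the μ-descent
          have hYcard : (Sv F c₂).card ≤ t := le_trans (Finset.card_le_card hYsub) hcard
          have hseq : Sv F c₂ = Sv F c := by
            refine Finset.eq_of_subset_of_card_le hYsub ?_
            have := Finset.card_le_card hYsub
            omega
          obtain ⟨w', hw'⟩ := hedvd
          have hnilY : c₂ ∣ lam^(N₀-1) := by
            refine ⟨w', ?_⟩
            have hpow : lam^(N₀-1) = lam^(N₀-2) * lam := by
              rw [← pow_succ]
              congr 1
              omega
            rw [hpow, hc₂def, hw']; ring
          refine IHμ (N₀ - 1) (by omega) F c₂ (Polynomial.C lam*p) q uniY h0 hYcard ?_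
          intro _
          refine ⟨k₀, ?_, ?_, hnilY⟩
          · rw [hseq]; exact hk₀mem
          · intro k hk
            rw [hseq] at hk
            exact hdivmax k hk
      have hfin := tau_mult_second callX callY
      rw [← Polynomial.C_mul, ← hsplit] at hfin
      exact hfin
    · -- z ∣ e hence c = 0 and F is a unit
      have hc0 : c = 0 := by
        rw [hce, he']
        calc lam^(N₀-1) * (z*e') = (lam^(N₀-1) * z) * e' := by ring
        _ = 0 := by rw [hz]; ring
      subst hc0
      have : F * q = 1 := by
        rw [Polynomial.C_0] at hdet
        linear_combination hdet
      exact tau_of_unit (IsUnit.of_mul_eq_one _ this) hdet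

end LemA


section Main
open scoped Classical
open Polynomial
variable {V : Type} [CommRing V]

lemma tau_M_X {M : Polynomial V} (h0 : IsUnit (M.coeff 0)) : tau M (Polynomial.X) := by
  obtain ⟨e, he⟩ := h0.exists_right_inv
  have base : tau (Polynomial.C (M.coeff 0)) (Polynomial.X (R := V)) := by
    refine tau_of_unit (Polynomial.isUnit_C.mpr h0) (p := 0) (q := Polynomial.C e) ?_
    rw [← Polynomial.C_mul, he]
    simp
  have step := tau_addA (h := M.divX) base
  have e2 : Polynomial.C (M.coeff 0) + Polynomial.X * M.divX = M := by
    rw [add_comm]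
    exact Polynomial.X_mul_divX_add M
  rwa [e2] at step

variable (hV : ∀ a b : V, a ∣ b ∨ b ∣ a)

include hV in
theorem main_lemma : ∀ n : ℕ, ∀ (M S p q : Polynomial V), M.natDegree ≤ n →
    IsUnit (M.coeff 0) → M*q - S*p = 1 → tau M S := by
  intro n
  induction n using Nat.strong_induction_on with
  | _ n IHn =>
  intro M S p q hdeg h0 hdet
  by_cases hM0 : M.natDegree = 0
  · -- M is a constant unit
    have hM : M = Polynomial.C (M.coeff 0) := Polynomial.eq_C_of_natDegree_eq_zero hM0
    refine tau_of_unit ?_ hdet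
    rw [hM]
    exact Polynomial.isUnit_C.mpr h0
  · have hm1 : 1 ≤ M.natDegree := by omega
    obtain ⟨e, he⟩ := h0.exists_right_inv
    -- the flush lemma
    have flush : ∀ ν : ℕ, ∀ (S' p' q' : Polynomial V), S'.natDegree ≤ M.natDegree - 1 →
        M*q' - S'*p' = 1 → IsUnit (S'.coeff ν) → (∀ k, k < ν → ¬IsUnit (S'.coeff k)) →
        tau M S' := by
      intro ν
      induction ν with
      | zero =>
        intro S' p' q' hdS hdet' hu _
        have huni : (-S')*p' - M*(-q') = 1 := by linear_combination hdet'
        have hcall : tau (-S') M := by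
          refine IHn (M.natDegree - 1) (by omega) (-S') M (-q') p' ?_ ?_ huni
          · rw [Polynomial.natDegree_neg]; exact hdS
          · rw [Polynomial.coeff_neg]; exact hu.neg
        exact tau_unswap hcall
      | succ ν IHν =>
        intro S' p' q' hdS hdet' hu hlow
        have hs0 : ¬IsUnit (S'.coeff 0) := hlow 0 (Nat.succ_pos _)
        set T' : Polynomial V := S' - Polynomial.C (S'.coeff 0 * e) * M with hT'def
        have hT'0 : T'.coeff 0 = 0 := by
          rw [hT'def]
          simp only [Polynomial.coeff_sub, Polynomial.coeff_C_mul]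
          linear_combination (-(S'.coeff 0)) * he
        set T₁ := T'.divX with hT₁def
        have hT'eq : Polynomial.X * T₁ = S' - Polynomial.C (S'.coeff 0 * e) * M := by
          rw [hT₁def, ← hT'def]
          have := Polynomial.X_mul_divX_add T'
          rwa [hT'0, Polynomial.C_0, add_zero] at this
        have hdT₁ : T₁.natDegree ≤ M.natDegree - 1 := by
          have h1 : T'.natDegree ≤ max S'.natDegree ((Polynomial.C (S'.coeff 0 * e) * M).natDegree) :=
            Polynomial.natDegree_sub_le _ _
          have h2 : (Polynomial.C (S'.coeff 0 * e) * M).natDegree ≤ M.natDegree :=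
            Polynomial.natDegree_C_mul_le _ _
          have h3 : T₁.natDegree = T'.natDegree - 1 :=
            Polynomial.natDegree_divX_eq_natDegree_tsub_one
          have h4 : S'.natDegree ≤ M.natDegree - 1 := hdS
          omega
        have huniT₁ : M*(q' - Polynomial.C (S'.coeff 0 * e)*p') - T₁*(Polynomial.X*p') = 1 := by
          linear_combination hdet' - p' * hT'eq
        have hcoT₁ : ∀ k, T₁.coeff k = S'.coeff (k+1) - (S'.coeff 0 * e) * M.coeff (k+1) := by
          intro k
          rw [hT₁def, Polynomial.coeff_divX, hT'def]
          simp only [Polynomial.coeff_sub, Polynomial.coeff_C_mul]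
        have huT₁ : IsUnit (T₁.coeff ν) := by
          rw [hcoT₁]
          refine unit_sub_nonunit hV hu ?_
          rw [show S'.coeff 0 * e * M.coeff (ν+1) = S'.coeff 0 * (e * M.coeff (ν+1)) by ring]
          exact nonunit_mul hs0 _
        have hlowT₁ : ∀ k, k < ν → ¬IsUnit (T₁.coeff k) := by
          intro k hk
          rw [hcoT₁]
          refine nonunits_sub hV (hlow (k+1) (by omega)) ?_
          rw [show S'.coeff 0 * e * M.coeff (k+1) = S'.coeff 0 * (e * M.coeff (k+1)) by ring]
          exact nonunit_mul hs0 _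
        have htau₁ : tau M T₁ := IHν T₁ (Polynomial.X*p') (q' - Polynomial.C (S'.coeff 0 * e)*p')
          hdT₁ huniT₁ huT₁ hlowT₁
        have htau₂ : tau M (Polynomial.X * T₁) := tau_mult_second (tau_M_X h0) htau₁
        rw [hT'eq] at htau₂
        rw [show S' - Polynomial.C (S'.coeff 0 * e) * M
            = S' + M * (-(Polynomial.C (S'.coeff 0 * e))) by ring] at htau₂
        exact tau_addB' _ htau₂
    -- inner B : the case deg S ≤ deg M - 1
    have innerB : ∀ (S' p' q' : Polynomial V), S'.natDegree ≤ M.natDegree - 1 →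
        M*q' - S'*p' = 1 → tau M S' := by
      intro S' p' q' hdS hdet'
      by_cases hS0 : S' = 0
      · subst hS0
        have : M * q' = 1 := by linear_combination hdet'
        exact tau_of_unit (IsUnit.of_mul_eq_one _ this) hdet'
      · -- content split
        have hsupp : S'.support.Nonempty := by
          rwa [Polynomial.support_nonempty]
        obtain ⟨j₀, hj₀, hmin⟩ := chain_min hV S'.coeff S'.support hsupp
        set c := S'.coeff j₀ with hcdef
        set qf : ℕ → V := fun k => if k = j₀ then 1 else
          (if h : k ∈ S'.support then Classical.choose (hmin k h) else 0) with hqfdef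
        have hfq : ∀ k ∈ S'.support, S'.coeff k = c * qf k := by
          intro k hk
          rw [hqfdef]
          by_cases hkj : k = j₀
          · subst hkj; simp [hcdef]
          · simp only [hkj, if_false, hk, dif_pos]
            exact Classical.choose_spec (hmin k hk)
        have hS₁ := eq_C_mul_sum qf hfq
        set S₁ := ∑ k ∈ S'.support, Polynomial.monomial k (qf k) with hS₁def
        have hS₁j₀ : S₁.coeff j₀ = 1 := by
          rw [hS₁def, Polynomial.finset_sum_coeff]
          simp only [Polynomial.coeff_monomial]
          rw [Finset.sum_ite_eq' S'.support j₀ qf]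
          simp [hj₀, hqfdef]
        have hdS₁ : S₁.natDegree ≤ M.natDegree - 1 := by
          refine le_trans (natDegree_sum_monomial_le _ _ S'.natDegree ?_) ?_
          · intro k hk; exact Polynomial.le_natDegree_of_mem_supp k hk
          · exact hdS
        have huniC : M*q' - Polynomial.C c*(S₁*p') = 1 := by
          rw [show Polynomial.C c*(S₁*p') = (Polynomial.C c*S₁)*p' by ring, ← hS₁]
          exact hdet'
        have huniS₁ : M*q' - S₁*(Polynomial.C c*p') = 1 := by
          rw [show S₁*(Polynomial.C c*p') = (Polynomial.C c*S₁)*p' by ring, ← hS₁]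
          exact hdet'
        have callC : tau M (Polynomial.C c) := by
          by_cases hne : (Sv M c).Nonempty
          · obtain ⟨j, hj, hjmax⟩ := chain_max hV M.coeff (Sv M c) hne
            have hjne : j ≠ 0 := (mem_Sv.mp hj).2.1
            obtain ⟨Nj, hNj⟩ := nilpotent_coeff_of_uni huniC j hjne
            exact lemA hV (Sv M c).card Nj M c (S₁*p') q' huniC h0 le_rfl
              (fun _ => ⟨j, hj, hjmax, hNj⟩)
          · exact lemA hV (Sv M c).card 0 M c (S₁*p') q' huniC h0 le_rfl
              (fun h => absurd h hne)
        have callS₁ : tau M S₁ := by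
          have hexu : ∃ j, IsUnit (S₁.coeff j) := ⟨j₀, by rw [hS₁j₀]; exact isUnit_one⟩
          set ν := Nat.find hexu with hν
          exact flush ν S₁ (Polynomial.C c*p') q' hdS₁ huniS₁ (Nat.find_spec hexu)
            (fun k hk => Nat.find_min hexu hk)
        have := tau_mult_second callC callS₁
        rwa [← hS₁] at this
    -- inner A : reduce the degree of S down to deg M - 1
    have innerA : ∀ m : ℕ, ∀ (S' p' q' : Polynomial V),
        S'.natDegree ≤ (M.natDegree - 1) + m → M*q' - S'*p' = 1 → tau M S' := by
      intro m
      induction m with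
      | zero => intro S' p' q' hdS hdet'; exact innerB S' p' q' (by omega) hdet'
      | succ m IHm =>
        intro S' p' q' hdS hdet'
        by_cases hdS' : S'.natDegree ≤ M.natDegree - 1
        · exact innerB S' p' q' hdS' hdet'
        · set T' : Polynomial V := S' - Polynomial.C (S'.coeff 0 * e) * M with hT'def
          have hT'0 : T'.coeff 0 = 0 := by
            rw [hT'def]
            simp only [Polynomial.coeff_sub, Polynomial.coeff_C_mul]
            linear_combination (-(S'.coeff 0)) * he
          set T₁ := T'.divX with hT₁def
          have hT'eq : Polynomial.X * T₁ = S' - Polynomial.C (S'.coeff 0 * e) * M := by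
            rw [hT₁def, ← hT'def]
            have := Polynomial.X_mul_divX_add T'
            rwa [hT'0, Polynomial.C_0, add_zero] at this
          have hdT₁ : T₁.natDegree ≤ (M.natDegree - 1) + m := by
            have h1 : T'.natDegree ≤ max S'.natDegree ((Polynomial.C (S'.coeff 0 * e) * M).natDegree) :=
              Polynomial.natDegree_sub_le _ _
            have h2 : (Polynomial.C (S'.coeff 0 * e) * M).natDegree ≤ M.natDegree :=
              Polynomial.natDegree_C_mul_le _ _
            have h3 : T₁.natDegree = T'.natDegree - 1 :=
              Polynomial.natDegree_divX_eq_natDegree_tsub_one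
            omega
          have huniT₁ : M*(q' - Polynomial.C (S'.coeff 0 * e)*p') - T₁*(Polynomial.X*p') = 1 := by
            linear_combination hdet' - p' * hT'eq
          have htau₁ : tau M T₁ := IHm T₁ (Polynomial.X*p') (q' - Polynomial.C (S'.coeff 0 * e)*p')
            hdT₁ huniT₁
          have htau₂ : tau M (Polynomial.X * T₁) := tau_mult_second (tau_M_X h0) htau₁
          rw [hT'eq] at htau₂
          rw [show S' - Polynomial.C (S'.coeff 0 * e) * M
              = S' + M * (-(Polynomial.C (S'.coeff 0 * e))) by ring] at htau₂
          exact tau_addB' _ htau₂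
    exact innerA S.natDegree S p q (by omega) hdet

end Main


end St

theorem stmt_12 {V : Type} [CommRing V] (hV : ∀ a b : V, a ∣ b ∨ b ∣ a)
    (f g p q : V[X])
    (hdet : (!![f, g, 0; p, q, 0; 0, 0, 1] : Matrix (Fin 3) (Fin 3) V[X]).det = 1) :
    !![f, g, 0; p, q, 0; 0, 0, 1] ∈ Elem (Fin 3) V[X] := by
  have hfq : f * q - g * p = 1 := by
    rw [Matrix.det_fin_three] at hdet
    simp at hdet
    linear_combination hdet
  rcases subsingleton_or_nontrivial V with hsub | hnt
  · haveI : Subsingleton (V[X]) := by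
      constructor
      intro a b
      ext n
      exact Subsingleton.elim _ _
    haveI : Subsingleton (Matrix (Fin 3) (Fin 3) V[X]) := by
      constructor
      intro a b
      ext i j
      exact Subsingleton.elim _ _
    rw [Subsingleton.elim (!![f, g, 0; p, q, 0; 0, 0, 1] : Matrix (Fin 3) (Fin 3) V[X]) 1]
    exact Submonoid.one_mem _
  · have h01 : f.coeff 0 * q.coeff 0 - g.coeff 0 * p.coeff 0 = 1 := by
      have := congrArg (fun r => Polynomial.coeff r 0) hfq
      simpa [Polynomial.mul_coeff_zero] using this
    have hcases : IsUnit (f.coeff 0 * q.coeff 0) ∨ IsUnit (g.coeff 0 * p.coeff 0) := by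
      by_contra hcon
      push_neg at hcon
      have := St.nonunits_sub hV hcon.1 hcon.2
      rw [h01] at this
      exact this isUnit_one
    have goalT : St.T f g p q := by
      rcases hcases with hu | hu
      · have h0f : IsUnit (f.coeff 0) := isUnit_of_mul_isUnit_left hu
        obtain ⟨P, Q, hPQ, hT⟩ := St.main_lemma hV f.natDegree f g p q le_rfl h0f hfq
        exact St.T_ind hPQ hfq hT
      · have h0g : IsUnit (g.coeff 0) := isUnit_of_mul_isUnit_left hu
        have h0g' : IsUnit ((-g).coeff 0) := by
          rw [Polynomial.coeff_neg]; exact h0g.neg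
        have hdet2 : (-g) * p - f * (-q) = 1 := by linear_combination hfq
        obtain ⟨P, Q, hPQ, hT⟩ := St.main_lemma hV (-g).natDegree (-g) f (-q) p le_rfl h0g' hdet2
        have hT2 : St.T (-g) f (-q) p := St.T_ind hPQ hdet2 hT
        exact St.move_swap.mpr hT2
    unfold St.T St.Dm at goalT
    exact goalT
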